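/- arXiv:1509.00526 — 2 statements merged into one kernel-verified Lean document; each statement's English description precedes it below -/
import Mathlib

section
/- A bipartition λ satisfies ẽ_i^{[1]}λ = 0 for all i ∈ ℤ if and only if λ^{(2)} = ∅ and λ^{(1)} is either empty or equal to the rectangle (a^{a+m}) (that is, a+m rows each of length a) for some integer a ≥ 1 with a + m ≥ 1. Likewise, λ satisfies ẽ_i^{[2]}λ = 0 for all i ∈ ℤ if and only if λ^{(1)} = ∅ and λ^{(2)} is either empty or equal to (a^{a+m}) for some integer a ≥ 1 with a + m ≥ 1. -/
/-- A partition: a weakly decreasing, eventually zero sequence of nonnegative integers.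
`part k` is the `(k+1)`-st part, i.e. the length of row `k+1`. -/
structure Partn where
  part : ℕ → ℕ
  antitone : ∀ k, part (k + 1) ≤ part k
  finite : ∃ N, ∀ k, N ≤ k → part k = 0

/-- The size `|λ| = Σ_k λ_k` of a partition (all parts beyond the chosen bound vanish). -/
noncomputable def Partn.size (p : Partn) : ℕ :=
  ∑ k ∈ Finset.range (Classical.choose p.finite), p.part k

/-- A bipartition `λ = (λ^{(1)}, λ^{(2)})`: component `0` is `λ^{(1)}`, component `1`
is `λ^{(2)}`. -/
abbrev Bipartn : Type := Fin 2 → Partn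

/-- The total number of boxes `|λ| = |λ^{(1)}| + |λ^{(2)}|`. -/
noncomputable def Bipartn.size (lam : Bipartn) : ℕ := (lam 0).size + (lam 1).size

/-- Row `k` (0-indexed) has an addable box at its end. -/
def AddableRow (p : Partn) (k : ℕ) : Prop :=
  k = 0 ∨ p.part k < p.part (k - 1)

/-- Row `k` (0-indexed) has a removable box at its end. -/
def RemovableRow (p : Partn) (k : ℕ) : Prop :=
  p.part (k + 1) < p.part k

/-- The content of the addable box in row `k` (0-indexed) of component `c`:
for the first component (`c = 0`) the box `(x, y) = (part k + 1, k + 1)` has content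
`y - x = k - part k`; for the second component (`c = 1`) it has content
`x - y + m = part k - k + m`. -/
def contA (m : ℤ) (c : Fin 2) (p : Partn) (k : ℕ) : ℤ :=
  if c = 0 then (k : ℤ) - p.part k else ((p.part k : ℤ) - k) + m

/-- The content of the removable box in row `k` (0-indexed) of component `c`:
for the first component the box `(x, y) = (part k, k + 1)` has content
`y - x = k + 1 - part k`; for the second component it has content
`x - y + m = part k - (k + 1) + m`. -/
def contR (m : ℤ) (c : Fin 2) (p : Partn) (k : ℕ) : ℤ :=
  if c = 0 then ((k : ℤ) + 1) - p.part k else ((p.part k : ℤ) - ((k : ℤ) + 1)) + m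

/-- A letter of a signature: a sign (`true` = '+', `false` = '−') together with the
component and the (0-indexed) row of the corresponding addable/removable box. -/
abbrev Letter : Type := Bool × Fin 2 × ℕ

open Classical in
/-- The letter of content `i` coming from component `c` of a bipartition: `'+'` if that
component has an addable box of content `i`, `'−'` if it has a removable box of content
`i`, nothing otherwise (each component has at most one such box, and not both). -/
noncomputable def compLetter (m : ℤ) (c : Fin 2) (p : Partn) (i : ℤ) : Option Letter :=
  if h : ∃ k, AddableRow p k ∧ contA m c p k = i then some (true, c, Classical.choose h)
  else if h : ∃ k, RemovableRow p k ∧ contR m c p k = i then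
    some (false, c, Classical.choose h)
  else none

/-- The `i`-signature of a bipartition for the crystal `[j]` (`ord = 0` encodes `[1]`,
`ord = 1` encodes `[2]`): for `[1]` the letter of the first component is listed first,
for `[2]` the letter of the second component is listed first. -/
noncomputable def word (m : ℤ) (ord : Fin 2) (lam : Bipartn) (i : ℤ) : List Letter :=
  if ord = 0 then
    (compLetter m 0 (lam 0) i).toList ++ (compLetter m 1 (lam 1) i).toList
  else
    (compLetter m 1 (lam 1) i).toList ++ (compLetter m 0 (lam 0) i).toList

/-- Delete the subword `−+` if it occurs (reduction of the signature). -/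
def reduceL : List Letter → List Letter
  | [] => []
  | a :: w =>
    match a.1, reduceL w with
    | false, (true, _) :: tail => tail
    | _, r => a :: r

/-- The box (component, row) removed by `ẽ_i^{[j]}`: the box of the leftmost '−' in the
reduced `i`-signature; `none` when the reduced signature has no '−', i.e. when
`ẽ_i^{[j]} λ = 0`. -/
noncomputable def eAct (m : ℤ) (ord : Fin 2) (i : ℤ) (lam : Bipartn) :
    Option (Fin 2 × ℕ) :=
  ((reduceL (word m ord lam i)).find? (fun a => !a.1)).map (fun a => a.2)

/-- The box (component, row) added by `f̃_i^{[j]}`: the box of the rightmost '+' in the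
reduced `i`-signature; `none` when the reduced signature has no '+', i.e. when
`f̃_i^{[j]} λ = 0`. -/
noncomputable def fAct (m : ℤ) (ord : Fin 2) (i : ℤ) (lam : Bipartn) :
    Option (Fin 2 × ℕ) :=
  ((reduceL (word m ord lam i)).reverse.find? (fun a => a.1)).map (fun a => a.2)

/-- `mu` is obtained from `lam` by removing the box at the end of row `k` of
component `c`. -/
def RemoveBox (lam : Bipartn) (c : Fin 2) (k : ℕ) (mu : Bipartn) : Prop :=
  (mu c).part k + 1 = (lam c).part k ∧
  (∀ k', k' ≠ k → (mu c).part k' = (lam c).part k') ∧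
  (∀ c', c' ≠ c → ∀ k', (mu c').part k' = (lam c').part k')

/-- `mu` is obtained from `lam` by adding a box at the end of row `k` of component `c`. -/
def AddBox (lam : Bipartn) (c : Fin 2) (k : ℕ) (mu : Bipartn) : Prop :=
  (mu c).part k = (lam c).part k + 1 ∧
  (∀ k', k' ≠ k → (mu c).part k' = (lam c).part k') ∧
  (∀ c', c' ≠ c → ∀ k', (mu c').part k' = (lam c').part k')

/-- `ẽ_i^{[j]} lam = mu` (in particular `ẽ_i^{[j]} lam ≠ 0`). -/
def ERel (m : ℤ) (ord : Fin 2) (i : ℤ) (lam mu : Bipartn) : Prop :=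
  ∃ c k, eAct m ord i lam = some (c, k) ∧ RemoveBox lam c k mu

/-- `f̃_i^{[j]} lam = mu` (in particular `f̃_i^{[j]} lam ≠ 0`). -/
def FRel (m : ℤ) (ord : Fin 2) (i : ℤ) (lam mu : Bipartn) : Prop :=
  ∃ c k, fAct m ord i lam = some (c, k) ∧ AddBox lam c k mu

section Aux

lemma Partn.mono (p : Partn) : Monotone (fun k : ℕ => (k : ℤ) - p.part k) := by
  apply monotone_nat_of_le_succ
  intro k
  have := p.antitone k
  push_cast
  omega

lemma Partn.anti_le (p : Partn) {k k' : ℕ} (h : k ≤ k') : p.part k' ≤ p.part k := by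
  induction h with
  | refl => exact le_refl _
  | step h ih => exact le_trans (p.antitone _) ih

lemma core_ne (p : Partn) {k' : ℕ} (hr : p.part (k' + 1) < p.part k') (k : ℕ) :
    (k : ℤ) - p.part k ≠ (k' : ℤ) + 1 - p.part k' := by
  rcases le_or_gt k k' with h | h
  · have := p.mono h
    simp only at this
    omega
  · have := p.mono (show k' + 1 ≤ k from h)
    simp only at this
    push_cast at this
    omega

lemma not_both (m : ℤ) (c : Fin 2) (p : Partn) {k k' : ℕ} (hr : RemovableRow p k') :
    contA m c p k ≠ contR m c p k' := by
  unfold contA contR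
  unfold RemovableRow at hr
  have := core_ne p hr k
  split <;> omega

lemma contR_strictMono (m : ℤ) (c : Fin 2) (p : Partn) {k k' : ℕ} (h : k < k') :
    contR m c p k ≠ contR m c p k' := by
  have h1 := p.mono (show k + 1 ≤ k' from h)
  have h2 := p.antitone k
  simp only at h1
  unfold contR
  split <;> push_cast at h1 ⊢ <;> omega

lemma contR_injOn (m : ℤ) (c : Fin 2) (p : Partn) {k k' : ℕ}
    (h : contR m c p k = contR m c p k') : k = k' := by
  rcases lt_trichotomy k k' with h' | h' | h'
  · exact absurd h (contR_strictMono m c p h')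
  · exact h'
  · exact absurd h.symm (contR_strictMono m c p h')

lemma eq_zero_of_no_removable (p : Partn) (h : ∀ k, ¬ RemovableRow p k) (k : ℕ) :
    p.part k = 0 := by
  have step : ∀ j, p.part k ≤ p.part (k + j) := by
    intro j
    induction j with
    | zero => exact le_refl _
    | succ j ih =>
      have := h (k + j)
      unfold RemovableRow at this
      have h2 : p.part (k + j) ≤ p.part (k + j + 1) := by omega
      have e : k + (j + 1) = k + j + 1 := by omega
      rw [e]
      omega
  obtain ⟨N, hN⟩ := p.finite
  have := step N
  have := hN (k + N) (by omega)
  omega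

lemma letter_true_iff (m : ℤ) (c : Fin 2) (p : Partn) (i : ℤ) :
    (∀ x : Letter, compLetter m c p i = some x → x.1 = true) ↔
      ¬ ∃ k, RemovableRow p k ∧ contR m c p k = i := by
  unfold compLetter
  split
  · rename_i h
    have hA := Classical.choose_spec h
    refine iff_of_true ?_ ?_
    · rintro x hx
      rw [Option.some_inj] at hx
      rw [← hx]
    · rintro ⟨k', hr, hc⟩
      exact not_both m c p hr (hA.2.trans hc.symm)
  · split
    · rename_i h h'
      refine iff_of_false ?_ (not_not_intro h')
      intro hall
      have := hall _ rfl
      simp at this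
    · rename_i h h'
      exact iff_of_true (fun x hx => nomatch hx) h'

lemma letter_none_iff (m : ℤ) (c : Fin 2) (p : Partn) (i : ℤ) :
    compLetter m c p i = none ↔
      (¬ ∃ k, AddableRow p k ∧ contA m c p k = i) ∧
      (¬ ∃ k, RemovableRow p k ∧ contR m c p k = i) := by
  unfold compLetter
  split
  · simp_all
  · split <;> simp_all

lemma no_removable_empty {p : Partn} (h : ∀ k, p.part k = 0) (k : ℕ) :
    ¬ RemovableRow p k := by
  unfold RemovableRow; rw [h, h]; omega

lemma exists_add_empty (m : ℤ) (c : Fin 2) {p : Partn} (h : ∀ k, p.part k = 0) (i : ℤ) :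
    (∃ k, AddableRow p k ∧ contA m c p k = i) ↔ i = (if c = 0 then 0 else m) := by
  constructor
  · rintro ⟨k, ha, hc⟩
    rcases ha with rfl | ha
    · rw [← hc]; unfold contA; rw [h]; split <;> simp
    · rw [h, h] at ha; omega
  · rintro rfl
    exact ⟨0, Or.inl rfl, by unfold contA; rw [h]; split <;> simp⟩

lemma compLetter_empty (m : ℤ) (c : Fin 2) {p : Partn} (h : ∀ k, p.part k = 0) (i : ℤ) :
    (compLetter m c p i = none ↔ i ≠ (if c = 0 then 0 else m)) := by
  rw [letter_none_iff]
  rw [exists_add_empty m c h i]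
  constructor
  · exact fun hh => hh.1
  · intro hi
    exact ⟨hi, fun ⟨k, hr, _⟩ => no_removable_empty h k hr⟩

lemma eAct_none_iff (m : ℤ) (ord : Fin 2) (i : ℤ) (lam : Bipartn) (o1 o2 : Option Letter)
    (hw : word m ord lam i = o1.toList ++ o2.toList) :
    eAct m ord i lam = none ↔
      ((∀ y : Letter, o2 = some y → y.1 = true) ∧
        (o2 = none → ∀ x : Letter, o1 = some x → x.1 = true)) := by
  unfold eAct
  rw [hw]
  rcases o1 with _ | ⟨b1, r1⟩ <;> rcases o2 with _ | ⟨b2, r2⟩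
  · simp [reduceL]
  · cases b2 <;> simp [reduceL]
  · cases b1 <;> simp [reduceL]
  · cases b1 <;> cases b2 <;> simp [reduceL]

lemma word_zero (m : ℤ) (lam : Bipartn) (i : ℤ) :
    word m 0 lam i =
      (compLetter m 0 (lam 0) i).toList ++ (compLetter m 1 (lam 1) i).toList := by
  simp [word]

lemma word_one (m : ℤ) (lam : Bipartn) (i : ℤ) :
    word m 1 lam i =
      (compLetter m 1 (lam 1) i).toList ++ (compLetter m 0 (lam 0) i).toList := by
  simp [word]

lemma const_head (p : Partn) (k0 : ℕ) (h : ∀ j, j < k0 → p.part (j + 1) = p.part j) :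
    ∀ j, j ≤ k0 → p.part j = p.part k0 := by
  induction k0 with
  | zero => intro j hj; rw [Nat.le_zero.mp hj]
  | succ n ih =>
    intro j hj
    rcases Nat.eq_or_lt_of_le hj with rfl | hj'
    · rfl
    · have hjn : j ≤ n := by omega
      rw [ih (fun j hj => h j (by omega)) j hjn]
      exact (h n (by omega)).symm

lemma comp_classify (m : ℤ) (c : Fin 2) (p : Partn)
    (hK : ∀ k, RemovableRow p k → contR m c p k = (if c = 0 then m else 0)) :
    (∀ k, p.part k = 0) ∨
      ∃ a : ℕ, 1 ≤ a ∧ 1 ≤ (a : ℤ) + m ∧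
        ∀ k : ℕ, (p.part k : ℤ) = if (k : ℤ) < (a : ℤ) + m then (a : ℤ) else 0 := by
  by_cases hrem : ∃ k, RemovableRow p k
  · obtain ⟨k0, hk0⟩ := hrem
    right
    have huniq : ∀ k, RemovableRow p k → k = k0 := fun k hk =>
      contR_injOn m c p ((hK k hk).trans (hK k0 hk0).symm)
    have hconst : ∀ k, k ≠ k0 → p.part (k + 1) = p.part k := by
      intro k hk
      have h1 : ¬ RemovableRow p k := fun h => hk (huniq k h)
      unfold RemovableRow at h1
      have := p.antitone k
      omega
    set a := p.part k0 with ha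
    have hhead : ∀ j, j ≤ k0 → p.part j = a :=
      const_head p k0 (fun j hj => hconst j (by omega))
    have htail0 : ∀ j, p.part (k0 + 1 + j) = p.part (k0 + 1) := by
      intro j
      induction j with
      | zero => rfl
      | succ n ih =>
        have e : k0 + 1 + (n + 1) = (k0 + 1 + n) + 1 := by omega
        rw [e, hconst (k0 + 1 + n) (by omega), ih]
    obtain ⟨N, hN⟩ := p.finite
    have htail : p.part (k0 + 1) = 0 := by
      have h2 := htail0 N
      rw [hN (k0 + 1 + N) (by omega)] at h2
      omega
    have hk0r := hk0
    unfold RemovableRow at hk0r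
    have ha1 : 1 ≤ a := by omega
    have hc := hK k0 hk0
    unfold contR at hc
    have ham : (k0 : ℤ) + 1 = (a : ℤ) + m := by
      split at hc <;> omega
    refine ⟨a, ha1, by omega, ?_⟩
    intro k
    by_cases hk : k ≤ k0
    · rw [hhead k hk, if_pos (show (k : ℤ) < (a : ℤ) + m by omega)]
    · have h0 : p.part k = 0 := by
        have e : k = k0 + 1 + (k - (k0 + 1)) := by omega
        rw [e, htail0, htail]
      rw [h0, if_neg (show ¬ ((k : ℤ) < (a : ℤ) + m) by omega)]
      simp
  · exact Or.inl (eq_zero_of_no_removable p (fun k hk => hrem ⟨k, hk⟩))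

lemma rect_removable_content (m : ℤ) (c : Fin 2) {a : ℕ} {p : Partn}
    (hp : ∀ k : ℕ, (p.part k : ℤ) = if (k : ℤ) < (a : ℤ) + m then (a : ℤ) else 0)
    (k : ℕ) (hk : RemovableRow p k) : contR m c p k = (if c = 0 then m else 0) := by
  unfold RemovableRow at hk
  have h1 := hp k
  have h2 := hp (k + 1)
  unfold contR
  split <;> split at h1 <;> split at h2 <;> omega

lemma main_half (m : ℤ) (ord : Fin 2) (lam : Bipartn) (c c' : Fin 2)
    (hw : ∀ i, word m ord lam i =
      (compLetter m c (lam c) i).toList ++ (compLetter m c' (lam c') i).toList)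
    (he : (if c' = 0 then (0 : ℤ) else m) = (if c = 0 then m else 0)) :
    (∀ i : ℤ, eAct m ord i lam = none) ↔
      ((∀ k, (lam c').part k = 0) ∧
        ((∀ k, (lam c).part k = 0) ∨
          ∃ a : ℕ, 1 ≤ a ∧ 1 ≤ (a : ℤ) + m ∧
            ∀ k : ℕ, ((lam c).part k : ℤ) =
              if (k : ℤ) < (a : ℤ) + m then (a : ℤ) else 0)) := by
  constructor
  · intro H
    have H' := fun i => (eAct_none_iff m ord i lam _ _ (hw i)).mp (H i)
    have hq : ∀ k, (lam c').part k = 0 := by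
      apply eq_zero_of_no_removable
      intro k hk
      have h3 := (letter_true_iff m c' (lam c') (contR m c' (lam c') k)).mp (H' _).1
      exact h3 ⟨k, hk, rfl⟩
    refine ⟨hq, ?_⟩
    apply comp_classify
    intro k hk
    by_contra hne
    have hnone : compLetter m c' (lam c') (contR m c (lam c) k) = none :=
      (compLetter_empty m c' hq _).mpr (by rw [he]; exact hne)
    have h3 := (letter_true_iff m c (lam c) _).mp ((H' _).2 hnone)
    exact h3 ⟨k, hk, rfl⟩
  · rintro ⟨hq, hp⟩ i
    rw [eAct_none_iff m ord i lam _ _ (hw i)]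
    constructor
    · rw [letter_true_iff]
      rintro ⟨k, hk, -⟩
      exact no_removable_empty hq k hk
    · intro hn
      rw [letter_true_iff]
      rintro ⟨k, hk, hkc⟩
      have hi : i ≠ (if c = 0 then m else 0) := by
        rw [← he]; exact (compLetter_empty m c' hq i).mp hn
      rcases hp with hp0 | ⟨a, ha, ham, hrect⟩
      · exact no_removable_empty hp0 k hk
      · exact hi (by rw [← hkc]; exact rect_removable_content m c hrect k hk)

end Aux

/-- A bipartition is annihilated by all `ẽ_i^{[1]}` iff its second component is empty and
its first component is empty or the rectangle `(a^{a+m})` (with `a ≥ 1`, `a + m ≥ 1`);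
and it is annihilated by all `ẽ_i^{[2]}` iff its first component is empty and its second
component is empty or the rectangle `(a^{a+m})` (with `a ≥ 1`, `a + m ≥ 1`). -/
theorem singular_bipartitions_are_rectangles (m : ℤ) (lam : Bipartn) :
    ((∀ i : ℤ, eAct m 0 i lam = none) ↔
      ((∀ k, (lam 1).part k = 0) ∧
        ((∀ k, (lam 0).part k = 0) ∨
          ∃ a : ℕ, 1 ≤ a ∧ 1 ≤ (a : ℤ) + m ∧
            ∀ k : ℕ, ((lam 0).part k : ℤ) =
              if (k : ℤ) < (a : ℤ) + m then (a : ℤ) else 0))) ∧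
    ((∀ i : ℤ, eAct m 1 i lam = none) ↔
      ((∀ k, (lam 0).part k = 0) ∧
        ((∀ k, (lam 1).part k = 0) ∨
          ∃ a : ℕ, 1 ≤ a ∧ 1 ≤ (a : ℤ) + m ∧
            ∀ k : ℕ, ((lam 1).part k : ℤ) =
              if (k : ℤ) < (a : ℤ) + m then (a : ℤ) else 0))) := by
  constructor
  · exact main_half m 0 lam 0 1 (fun i => word_zero m lam i)
      (by rw [if_neg (by decide), if_pos rfl])
  · exact main_half m 1 lam 1 0 (fun i => word_one m lam i)
      (by rw [if_pos rfl, if_neg (by decide)])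
end

section
/- For every integer n ≥ 0 and each j ∈ {1,2}, there is at most one bipartition λ with |λ| = n satisfying ẽ_i^{[j]}λ = 0 for all i ∈ ℤ. -/
section Helpers

lemma Partn.ext' (p q : Partn) (h : p.part = q.part) : p = q := by
  cases p; cases q; cases h; rfl

lemma Partn.part_mono (p : Partn) : ∀ {k l : ℕ}, k ≤ l → p.part l ≤ p.part k := by
  intro k l h
  induction h with
  | refl => exact le_refl _
  | step h ih => exact le_trans (p.antitone _) ih

lemma no_both (m : ℤ) (c : Fin 2) (p : Partn) {a r : ℕ}
    (hr : RemovableRow p r) (heq : contA m c p a = contR m c p r) : False := by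
  have h1 : p.part (r + 1) < p.part r := hr
  rcases le_or_gt a r with h | h
  · have h2 : p.part r ≤ p.part a := p.part_mono h
    by_cases hc : c = 0 <;> simp [contA, contR, hc] at heq <;> omega
  · have h2 : p.part a ≤ p.part (r + 1) := p.part_mono h
    by_cases hc : c = 0 <;> simp [contA, contR, hc] at heq <;> omega

lemma contR_lt (m : ℤ) (c : Fin 2) (p : Partn) {k1 k2 : ℕ}
    (h1 : RemovableRow p k1) (hlt : k1 < k2) :
    contR m c p k1 ≠ contR m c p k2 := by
  have ha : p.part k2 ≤ p.part (k1 + 1) := p.part_mono hlt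
  have hb : p.part (k1 + 1) < p.part k1 := h1
  intro heq
  by_cases hc : c = 0 <;> simp [contR, hc] at heq <;> omega

lemma contR_inj (m : ℤ) (c : Fin 2) (p : Partn) {k1 k2 : ℕ}
    (h1 : RemovableRow p k1) (h2 : RemovableRow p k2)
    (heq : contR m c p k1 = contR m c p k2) : k1 = k2 := by
  rcases lt_trichotomy k1 k2 with h | h | h
  · exact absurd heq (contR_lt m c p h1 h)
  · exact h
  · exact absurd heq.symm (contR_lt m c p h2 h)

lemma compLetter_of_removable (m : ℤ) (c : Fin 2) (p : Partn) (k : ℕ)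
    (hk : RemovableRow p k) :
    compLetter m c p (contR m c p k) = some (false, c, k) := by
  have hex : ∃ k', RemovableRow p k' ∧ contR m c p k' = contR m c p k := ⟨k, hk, rfl⟩
  have hA : ¬ ∃ a, AddableRow p a ∧ contA m c p a = contR m c p k := by
    rintro ⟨a, -, hca⟩
    exact no_both m c p hk hca
  unfold compLetter
  rw [dif_neg hA, dif_pos hex]
  obtain ⟨hh1, hh2⟩ := Classical.choose_spec hex
  have := contR_inj m c p hh1 hk hh2
  simp [this]

lemma compLetter_zero (m : ℤ) (c : Fin 2) (p : Partn) (hp : ∀ k, p.part k = 0) (i : ℤ)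
    (hi : i ≠ contA m c p 0) : compLetter m c p i = none := by
  have hA : ¬ ∃ a, AddableRow p a ∧ contA m c p a = i := by
    rintro ⟨a, ha, hca⟩
    rcases ha with rfl | hlt
    · exact hi hca.symm
    · simp [hp] at hlt
  have hR : ¬ ∃ r, RemovableRow p r ∧ contR m c p r = i := by
    rintro ⟨r, hr, -⟩
    simp [RemovableRow, hp] at hr
  unfold compLetter
  rw [dif_neg hA, dif_neg hR]

lemma mem_reduce_last (l : List Letter) (a : Letter) (ha : a.1 = false)
    (hl : l.length ≤ 1) : a ∈ reduceL (l ++ [a]) := by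
  obtain ⟨ab, a2⟩ := a
  obtain rfl : ab = false := ha
  match l, hl with
  | [], _ => simp [reduceL]
  | [b], _ =>
    obtain ⟨bb, b2⟩ := b
    cases bb <;> simp [reduceL]

lemma all_true_of_none {m : ℤ} {ord : Fin 2} {i : ℤ} {lam : Bipartn}
    (h : eAct m ord i lam = none) :
    ∀ a ∈ reduceL (word m ord lam i), a.1 = true := by
  intro a ha
  rw [eAct, Option.map_eq_none_iff] at h
  have := List.find?_eq_none.mp h a ha
  simpa using this

lemma rect (p : Partn)
    (huniq : ∀ k1 k2, RemovableRow p k1 → RemovableRow p k2 → k1 = k2) :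
    (∀ k, p.part k = 0) ∨
    ∃ k0, RemovableRow p k0 ∧ ∀ k, p.part k = if k ≤ k0 then p.part k0 else 0 := by
  by_cases hz : ∀ k, p.part k = 0
  · exact Or.inl hz
  push_neg at hz
  obtain ⟨j, hj⟩ := hz
  obtain ⟨N, hN⟩ := p.finite
  have hjN : j < N := by
    by_contra h
    exact hj (hN j (le_of_not_gt h))
  set k0 := Nat.findGreatest (fun k => p.part k ≠ 0) N with hk0
  have hspec : p.part k0 ≠ 0 :=
    Nat.findGreatest_spec (P := fun k => p.part k ≠ 0) (le_of_lt hjN) hj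
  have hgt : ∀ k, k0 < k → p.part k = 0 := by
    intro k hk
    rcases le_or_gt k N with h | h
    · by_contra hne
      exact (Nat.findGreatest_is_greatest hk h) hne
    · exact hN k (le_of_lt h)
  have hrem : RemovableRow p k0 := by
    have h1 := hgt (k0 + 1) (Nat.lt_succ_self _)
    simp only [RemovableRow, h1]
    omega
  refine Or.inr ⟨k0, hrem, ?_⟩
  have hstep : ∀ k, k < k0 → p.part k = p.part (k + 1) := by
    intro k hk
    have hnr : ¬ RemovableRow p k := fun h => absurd (huniq k k0 h hrem) (Nat.ne_of_lt hk)
    have h2 := p.antitone k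
    simp only [RemovableRow, not_lt] at hnr
    omega
  have hconst : ∀ d k, k + d = k0 → p.part k = p.part k0 := by
    intro d
    induction d with
    | zero => intro k h; rw [← h, Nat.add_zero]
    | succ d ih =>
      intro k h
      rw [hstep k (by omega)]
      exact ih (k + 1) (by omega)
  intro k
  by_cases hk : k ≤ k0
  · rw [if_pos hk]
    exact hconst (k0 - k) k (by omega)
  · rw [if_neg hk]
    exact hgt k (by omega)

lemma size_eq (p : Partn) (M : ℕ) (hM : ∀ k, M ≤ k → p.part k = 0) :
    p.size = ∑ k ∈ Finset.range M, p.part k := by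
  unfold Partn.size
  have hN := Classical.choose_spec p.finite
  set N := Classical.choose p.finite
  have h1 : ∑ k ∈ Finset.range N, p.part k = ∑ k ∈ Finset.range (max M N), p.part k :=
    Finset.sum_subset (Finset.range_subset_range.mpr (le_max_right M N))
      (by intro x hx hnx; simp only [Finset.mem_range] at hx hnx; exact hN x (by omega))
  have h2 : ∑ k ∈ Finset.range M, p.part k = ∑ k ∈ Finset.range (max M N), p.part k :=
    Finset.sum_subset (Finset.range_subset_range.mpr (le_max_left M N))
      (by intro x hx hnx; simp only [Finset.mem_range] at hx hnx; exact hM x (by omega))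
  rw [h1, h2]

lemma size_zero (p : Partn) (hz : ∀ k, p.part k = 0) : p.size = 0 := by
  rw [size_eq p 0 (fun k _ => hz k)]
  simp

lemma size_rect (p : Partn) (r w : ℕ) (hw : ∀ k, p.part k = if k < r then w else 0) :
    p.size = r * w := by
  rw [size_eq p r (fun k hk => by rw [hw k, if_neg (by omega)])]
  calc ∑ k ∈ Finset.range r, p.part k = ∑ _k ∈ Finset.range r, w :=
        Finset.sum_congr rfl (fun k hk => by
          rw [hw k, if_pos (Finset.mem_range.mp hk)])
    _ = r * w := by rw [Finset.sum_const, Finset.card_range, smul_eq_mul]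

/-- The shape predicate satisfied by any singular bipartition's main component. -/
def RectShape (m : ℤ) (p : Partn) : Prop :=
  (∀ k, p.part k = 0) ∨
  ∃ r w : ℕ, 1 ≤ r ∧ 1 ≤ w ∧ (r : ℤ) = (w : ℤ) + m ∧
    ∀ k, p.part k = if k < r then w else 0

lemma rectShape_unique (m : ℤ) (p q : Partn) (hsz : p.size = q.size)
    (hp : RectShape m p) (hq : RectShape m q) : ∀ k, p.part k = q.part k := by
  rcases hp with hp | ⟨r1, w1, hr1, hw1, he1, hs1⟩ <;>
    rcases hq with hq | ⟨r2, w2, hr2, hw2, he2, hs2⟩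
  · intro k; rw [hp, hq]
  · exfalso
    rw [size_zero p hp, size_rect q r2 w2 hs2] at hsz
    have := Nat.mul_pos hr2 hw2
    omega
  · exfalso
    rw [size_zero q hq, size_rect p r1 w1 hs1] at hsz
    have := Nat.mul_pos hr1 hw1
    omega
  · rw [size_rect p r1 w1 hs1, size_rect q r2 w2 hs2] at hsz
    have hcast : (r1 : ℤ) * w1 = (r2 : ℤ) * w2 := by exact_mod_cast hsz
    rw [he1, he2] at hcast
    have key : ((w1 : ℤ) - w2) * ((w1 : ℤ) + w2 + m) = 0 := by linear_combination hcast
    have hww : w1 = w2 := by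
      rcases mul_eq_zero.mp key with h | h
      · exact_mod_cast sub_eq_zero.mp h
      · exfalso
        have hb1 : (1 : ℤ) ≤ (w1 : ℤ) := by exact_mod_cast hw1
        have hb2 : (1 : ℤ) ≤ (w2 : ℤ) + m := by rw [← he2]; exact_mod_cast hr2
        linarith
    have hrr : r1 = r2 := by
      have : (r1 : ℤ) = (r2 : ℤ) := by rw [he1, he2, hww]
      exact_mod_cast this
    intro k
    rw [hs1, hs2, hww, hrr]

lemma key_struct (m : ℤ) (ord : Fin 2) (lam : Bipartn) (c1 c2 : Fin 2)
    (hcc : (c1 = 0 ∧ c2 = 1) ∨ (c1 = 1 ∧ c2 = 0))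
    (hw : ∀ i, word m ord lam i =
      (compLetter m c1 (lam c1) i).toList ++ (compLetter m c2 (lam c2) i).toList)
    (hs : ∀ i : ℤ, eAct m ord i lam = none) :
    (∀ k, (lam c2).part k = 0) ∧ RectShape m (lam c1) := by
  -- the second-listed component has no removable rows
  have hnorem2 : ∀ k, ¬ RemovableRow (lam c2) k := by
    intro k hk
    set i := contR m c2 (lam c2) k with hi
    have hcl : compLetter m c2 (lam c2) i = some (false, c2, k) :=
      compLetter_of_removable m c2 (lam c2) k hk
    have hall := all_true_of_none (hs i)
    rw [hw i, hcl] at hall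
    cases h1 : compLetter m c1 (lam c1) i with
    | none =>
      rw [h1] at hall
      have := hall (false, c2, k) (by simpa using mem_reduce_last [] (false, c2, k) rfl (by simp))
      simp at this
    | some b =>
      rw [h1] at hall
      have := hall (false, c2, k)
        (by simpa using mem_reduce_last [b] (false, c2, k) rfl (by simp))
      simp at this
  have hzero2 : ∀ k, (lam c2).part k = 0 := by
    have hconst : ∀ k, (lam c2).part k = (lam c2).part 0 := by
      intro k
      induction k with
      | zero => rfl
      | succ j ih =>
        have h1 := (lam c2).antitone j
        have h2 := hnorem2 j
        simp only [RemovableRow, not_lt] at h2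
        omega
    obtain ⟨N, hN⟩ := (lam c2).finite
    intro k
    have h0 : (lam c2).part 0 = 0 := by rw [← hconst N, hN N le_rfl]
    rw [hconst k, h0]
  refine ⟨hzero2, ?_⟩
  -- every removable row of the first-listed component has content i0
  set i0 := contA m c2 (lam c2) 0 with hi0
  have hA : ∀ k, RemovableRow (lam c1) k → contR m c1 (lam c1) k = i0 := by
    intro k hk
    by_contra hne
    set i := contR m c1 (lam c1) k with hi
    have hcl : compLetter m c1 (lam c1) i = some (false, c1, k) :=
      compLetter_of_removable m c1 (lam c1) k hk
    have h2 : compLetter m c2 (lam c2) i = none := compLetter_zero m c2 (lam c2) hzero2 i hne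
    have hall := all_true_of_none (hs i)
    rw [hw i, hcl, h2] at hall
    have := hall (false, c1, k)
      (by simpa using mem_reduce_last [] (false, c1, k) rfl (by simp))
    simp at this
  have huniq : ∀ k1 k2, RemovableRow (lam c1) k1 → RemovableRow (lam c1) k2 → k1 = k2 := by
    intro k1 k2 h1 h2
    exact contR_inj m c1 (lam c1) h1 h2 ((hA k1 h1).trans (hA k2 h2).symm)
  rcases rect (lam c1) huniq with hz | ⟨k0, hrem, hshape⟩
  · exact Or.inl hz
  refine Or.inr ⟨k0 + 1, (lam c1).part k0, by omega, ?_, ?_, ?_⟩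
  · have h1 : (lam c1).part (k0 + 1) < (lam c1).part k0 := hrem
    omega
  · have hA' := hA k0 hrem
    rcases hcc with ⟨rfl, rfl⟩ | ⟨rfl, rfl⟩
    · have e1 : contR m 0 (lam 0) k0 = ((k0 : ℤ) + 1) - (lam 0).part k0 := by
        rw [contR, if_pos rfl]
      have e2 : contA m 1 (lam 1) 0 = m := by
        rw [contA, if_neg (by decide), hzero2 0]
        simp
      rw [hi0, e1, e2] at hA'
      push_cast
      omega
    · have e1 : contR m 1 (lam 1) k0 = ((lam 1).part k0 : ℤ) - ((k0 : ℤ) + 1) + m := by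
        rw [contR, if_neg (by decide)]
      have e2 : contA m 0 (lam 0) 0 = 0 := by
        rw [contA, if_pos rfl, hzero2 0]
        simp
      rw [hi0, e1, e2] at hA'
      push_cast
      omega
  · intro k
    rw [hshape k]
    by_cases hk : k ≤ k0
    · rw [if_pos hk, if_pos (by omega)]
    · rw [if_neg hk, if_neg (by omega)]

end Helpers

/-- For every `n` and each crystal `[j]` (`ord = 0` encodes `[1]`, `ord = 1` encodes
`[2]`), there is at most one bipartition with `n` boxes annihilated by all the crystal
operators `ẽ_i^{[j]}`, `i ∈ ℤ`. -/
theorem at_most_one_singular_bipartition (m : ℤ) (n : ℕ) (ord : Fin 2)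
    (lam mu : Bipartn) (hlam : lam.size = n) (hmu : mu.size = n)
    (hslam : ∀ i : ℤ, eAct m ord i lam = none)
    (hsmu : ∀ i : ℤ, eAct m ord i mu = none) :
    lam = mu := by
  fin_cases ord
  · -- ord = 0 : first component listed first
    have hwl : ∀ (lam' : Bipartn) (i : ℤ), word m 0 lam' i =
        (compLetter m 0 (lam' 0) i).toList ++ (compLetter m 1 (lam' 1) i).toList := by
      intro lam' i; simp [word]
    obtain ⟨hz2l, hl⟩ := key_struct m 0 lam 0 1 (Or.inl ⟨rfl, rfl⟩) (hwl lam) hslam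
    obtain ⟨hz2m, hm⟩ := key_struct m 0 mu 0 1 (Or.inl ⟨rfl, rfl⟩) (hwl mu) hsmu
    have hsl : (lam 0).size = n := by
      have h0 := size_zero (lam 1) hz2l
      have : lam.size = (lam 0).size + (lam 1).size := rfl
      omega
    have hsm : (mu 0).size = n := by
      have h0 := size_zero (mu 1) hz2m
      have : mu.size = (mu 0).size + (mu 1).size := rfl
      omega
    have hmain := rectShape_unique m (lam 0) (mu 0) (by rw [hsl, hsm]) hl hm
    funext c
    apply Partn.ext'
    funext k
    fin_cases c
    · exact hmain k
    · show (lam 1).part k = (mu 1).part k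
      rw [hz2l k, hz2m k]
  · -- ord = 1 : second component listed first
    have hwl : ∀ (lam' : Bipartn) (i : ℤ), word m 1 lam' i =
        (compLetter m 1 (lam' 1) i).toList ++ (compLetter m 0 (lam' 0) i).toList := by
      intro lam' i; simp [word]
    obtain ⟨hz2l, hl⟩ := key_struct m 1 lam 1 0 (Or.inr ⟨rfl, rfl⟩) (hwl lam) hslam
    obtain ⟨hz2m, hm⟩ := key_struct m 1 mu 1 0 (Or.inr ⟨rfl, rfl⟩) (hwl mu) hsmu
    have hsl : (lam 1).size = n := by
      have h0 := size_zero (lam 0) hz2l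
      have : lam.size = (lam 0).size + (lam 1).size := rfl
      omega
    have hsm : (mu 1).size = n := by
      have h0 := size_zero (mu 0) hz2m
      have : mu.size = (mu 0).size + (mu 1).size := rfl
      omega
    have hmain := rectShape_unique m (lam 1) (mu 1) (by rw [hsl, hsm]) hl hm
    funext c
    apply Partn.ext'
    funext k
    fin_cases c
    · show (lam 0).part k = (mu 0).part k
      rw [hz2l k, hz2m k]
    · exact hmain k
end
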